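/- Let b₂,…,b_n ∈ ℂ be nonzero scalars with b_i^ℓ ≠ b_j^ℓ for all 2 ≤ i < j ≤ n, let b = diag(b₂, b₂, b₃,…,b_n) ∈ Mat_n(ℂ) (so that b₂ occurs with multiplicity two), and let X_b = (b, b, …, b) ∈ V. Then the stabilizer {g ∈ G : g·X_b = X_b} consists exactly of the constant tuples (g, g, …, g) with g ∈ GL_n(ℂ) commuting with b; such g are precisely the block-diagonal matrices diag(A, t₃,…,t_n) with A ∈ GL₂(ℂ) and t₃,…,t_n ∈ ℂ^×, so the stabilizer is isomorphic as a group to GL₂(ℂ) × (ℂ^×)^{n−2}. -/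

import Mathlib

/-! STATEMENT 15: with `G = GL_n(ℂ)^ℓ` acting on `V = Mat_n(ℂ)^ℓ` as above and
`X_b = (b,…,b)` for `b = diag(b₂,b₂,b₃,…,b_n)` (`b_i ≠ 0`, `b_i^ℓ` pairwise distinct
away from the repeated entry), the stabilizer of `X_b` consists exactly of the
constant tuples `(g,…,g)` with `g` commuting with `b`; such `g` are precisely the
block-diagonal matrices `diag(A, t₃, …, t_n)` with `A ∈ GL₂(ℂ)`, so the stabilizer is
isomorphic to `GL₂(ℂ) × (ℂ^×)^{n-2}`. -/


noncomputable section

set_option maxHeartbeats 1000000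

variable (n ℓ : ℕ) [NeZero ℓ]

/-- The representation space `V = Rep(Q_ℓ, nδ) = Mat_n(ℂ)^ℓ`. -/
abbrev Vq : Type := Fin ℓ → Matrix (Fin n) (Fin n) ℂ

/-- The group `G = GL_n(ℂ)^ℓ`. -/
abbrev Gq : Type := Fin ℓ → Matrix.GeneralLinearGroup (Fin n) ℂ

/-- The action `(g·X)⁽ⁱ⁾ = g⁽ⁱ⁺¹⁾ X⁽ⁱ⁾ (g⁽ⁱ⁾)⁻¹` (indices mod ℓ). -/
def qAct (g : Gq n ℓ) (M : Vq n ℓ) : Vq n ℓ :=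
  fun i => (g (i + 1) : Matrix (Fin n) (Fin n) ℂ) * M i * (((g i)⁻¹ : Matrix.GeneralLinearGroup (Fin n) ℂ) : Matrix (Fin n) (Fin n) ℂ)

lemma qAct_eq_iff (g : Gq n ℓ) (M : Vq n ℓ) :
    qAct n ℓ g M = M ↔ ∀ i, (g (i + 1) : Matrix (Fin n) (Fin n) ℂ) * M i
      = M i * (g i : Matrix (Fin n) (Fin n) ℂ) := by
  constructor
  · intro h i
    have hi := congrFun h i
    simp only [qAct] at hi
    calc (g (i + 1) : Matrix (Fin n) (Fin n) ℂ) * M i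
        = ((g (i + 1) : Matrix (Fin n) (Fin n) ℂ) * M i * ((g i)⁻¹ :
            Matrix.GeneralLinearGroup (Fin n) ℂ)) * (g i : Matrix (Fin n) (Fin n) ℂ) := by
          rw [Units.inv_mul_cancel_right]
      _ = M i * (g i : Matrix (Fin n) (Fin n) ℂ) := by rw [hi]
  · intro h
    funext i
    simp only [qAct]
    rw [h i, Units.mul_inv_cancel_right]

/-- The stabilizer of `M ∈ V` in `G`, as a subgroup. -/
def qStab (M : Vq n ℓ) : Subgroup (Gq n ℓ) where
  carrier := {g | qAct n ℓ g M = M}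
  one_mem' := by
    simp only [Set.mem_setOf_eq, qAct_eq_iff]
    intro i
    simp
  mul_mem' := by
    intro g h hg hh
    simp only [Set.mem_setOf_eq, qAct_eq_iff] at *
    intro i
    have : ((g * h) (i + 1) : Matrix (Fin n) (Fin n) ℂ) = (g (i+1) : Matrix (Fin n) (Fin n) ℂ) * (h (i+1) : Matrix (Fin n) (Fin n) ℂ) := rfl
    rw [this, mul_assoc, hh i, ← mul_assoc, hg i, mul_assoc]
    rfl
  inv_mem' := by
    intro g hg
    simp only [Set.mem_setOf_eq, qAct_eq_iff] at *
    intro i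
    have hgi := hg i
    calc (g⁻¹ (i + 1) : Matrix (Fin n) (Fin n) ℂ) * M i
        = (g⁻¹ (i + 1) : Matrix (Fin n) (Fin n) ℂ) * M i * (g i : Matrix (Fin n) (Fin n) ℂ) * ((g i)⁻¹ : Matrix.GeneralLinearGroup (Fin n) ℂ) := by
          rw [Units.mul_inv_cancel_right]
      _ = (g⁻¹ (i + 1) : Matrix (Fin n) (Fin n) ℂ) * ((g (i+1) : Matrix (Fin n) (Fin n) ℂ) * M i) * ((g i)⁻¹ : Matrix.GeneralLinearGroup (Fin n) ℂ) := by
          rw [mul_assoc ((g⁻¹ (i + 1) : Matrix (Fin n) (Fin n) ℂ)), hgi]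
      _ = M i * (g⁻¹ i : Matrix (Fin n) (Fin n) ℂ) := by
          have h1 : (g⁻¹ (i + 1) : Matrix (Fin n) (Fin n) ℂ) * (g (i+1) : Matrix (Fin n) (Fin n) ℂ) = 1 := by
            rw [← Units.val_mul]
            simp
          rw [← mul_assoc, h1, one_mul]
          rfl


namespace Stmt15Aux

open Matrix

variable {n : ℕ}

/-- index equivalence splitting `Fin n` into the first two indices and the rest. -/
def σe (hn : 2 ≤ n) : Fin 2 ⊕ Fin (n - 2) ≃ Fin n :=
  finSumFinEquiv.trans (finCongr (by omega))

lemma σe_inl_val (hn : 2 ≤ n) (i : Fin 2) : ((σe hn) (Sum.inl i) : ℕ) = i.val := by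
  simp [σe]

lemma σe_inr_val (hn : 2 ≤ n) (j : Fin (n - 2)) : ((σe hn) (Sum.inr j) : ℕ) = 2 + j.val := by
  simp [σe]

/-- block structure predicate -/
def Blk (m : Matrix (Fin n) (Fin n) ℂ) : Prop :=
  ∀ k l : Fin n, k ≠ l → ¬((k : ℕ) < 2 ∧ (l : ℕ) < 2) → m k l = 0

lemma commute_diagonal_iff_blk (c : Fin n → ℂ)
    (hc : ∀ k l : Fin n, k ≠ l → ¬((k : ℕ) < 2 ∧ (l : ℕ) < 2) → c k ≠ c l)
    (hceq : ∀ k l : Fin n, (k : ℕ) < 2 → (l : ℕ) < 2 → c k = c l)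
    (m : Matrix (Fin n) (Fin n) ℂ) :
    m * Matrix.diagonal c = Matrix.diagonal c * m ↔ Blk m := by
  constructor
  · intro h k l hkl h2
    have h' : (m * Matrix.diagonal c) k l = (Matrix.diagonal c * m) k l := by rw [h]
    rw [mul_diagonal, diagonal_mul] at h'
    by_contra hm
    exact hc k l hkl h2 ((mul_left_cancel₀ hm (by rw [h', mul_comm])).symm)
  · intro h
    ext k l
    rw [mul_diagonal, diagonal_mul]
    by_cases hkl : k = l
    · subst hkl; ring
    by_cases h2 : (k : ℕ) < 2 ∧ (l : ℕ) < 2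
    · rw [hceq k l h2.1 h2.2]; ring
    · rw [h k l hkl h2]; ring

/-- the block matrix `diag(A, t)` -/
def Fmat (hn : 2 ≤ n) (A : Matrix (Fin 2) (Fin 2) ℂ) (t : Fin (n - 2) → ℂ) :
    Matrix (Fin n) (Fin n) ℂ :=
  (Matrix.fromBlocks A 0 0 (Matrix.diagonal t)).submatrix (σe hn).symm (σe hn).symm

lemma Fmat_mul (hn : 2 ≤ n) (A A' : Matrix (Fin 2) (Fin 2) ℂ) (t t' : Fin (n - 2) → ℂ) :
    Fmat hn A t * Fmat hn A' t' = Fmat hn (A * A') (t * t') := by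
  unfold Fmat
  rw [Matrix.submatrix_mul_equiv _ _ _ ((σe hn).symm) _, Matrix.fromBlocks_multiply]
  simp only [Matrix.diagonal_mul_diagonal, Matrix.mul_zero, Matrix.zero_mul,
    add_zero, zero_add]
  rfl

lemma Fmat_one (hn : 2 ≤ n) : Fmat hn 1 1 = 1 := by
  unfold Fmat
  rw [show (1 : Fin (n-2) → ℂ) = fun _ => (1:ℂ) from rfl, Matrix.diagonal_one,
    Matrix.fromBlocks_one, Matrix.submatrix_one_equiv]

lemma Fmat_inj (hn : 2 ≤ n) {A A' : Matrix (Fin 2) (Fin 2) ℂ} {t t' : Fin (n - 2) → ℂ}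
    (h : Fmat hn A t = Fmat hn A' t') : A = A' ∧ t = t' := by
  have key : ∀ p q : Fin 2 ⊕ Fin (n - 2),
      Matrix.fromBlocks A (0 : Matrix (Fin 2) (Fin (n-2)) ℂ)
        (0 : Matrix (Fin (n-2)) (Fin 2) ℂ) (Matrix.diagonal t) p q
      = Matrix.fromBlocks A' 0 0 (Matrix.diagonal t') p q := by
    intro p q
    have := congrFun (congrFun h (σe hn p)) (σe hn q)
    simpa [Fmat] using this
  constructor
  · ext i j; simpa using key (Sum.inl i) (Sum.inl j)
  · funext k; simpa using key (Sum.inr k) (Sum.inr k)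

lemma blk_Fmat (hn : 2 ≤ n) (A : Matrix (Fin 2) (Fin 2) ℂ) (t : Fin (n - 2) → ℂ) :
    Blk (Fmat hn A t) := by
  intro k l hkl h2
  obtain ⟨k', rfl⟩ := (σe hn).surjective k
  obtain ⟨l', rfl⟩ := (σe hn).surjective l
  have hkl' : k' ≠ l' := fun h => hkl (by rw [h])
  simp only [Fmat, submatrix_apply, Equiv.symm_apply_apply]
  cases k' with
  | inl i =>
    cases l' with
    | inl j =>
      exact absurd ⟨by rw [σe_inl_val]; exact i.2, by rw [σe_inl_val]; exact j.2⟩ h2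
    | inr j => simp [Matrix.fromBlocks]
  | inr i =>
    cases l' with
    | inl j => simp [Matrix.fromBlocks]
    | inr j =>
      have : i ≠ j := fun h => hkl' (by rw [h])
      simp [Matrix.fromBlocks, Matrix.diagonal_apply_ne _ this]

lemma blk_eq_Fmat (hn : 2 ≤ n) {m : Matrix (Fin n) (Fin n) ℂ} (hm : Blk m) :
    m = Fmat hn (Matrix.of fun i j => m (σe hn (Sum.inl i)) (σe hn (Sum.inl j)))
        (fun k => m (σe hn (Sum.inr k)) (σe hn (Sum.inr k))) := by
  have hne : ∀ (i : Fin 2) (j : Fin (n-2)), σe hn (Sum.inl i) ≠ σe hn (Sum.inr j) := by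
    intro i j h
    exact absurd ((σe hn).injective h) (by simp)
  ext k l
  obtain ⟨k', rfl⟩ := (σe hn).surjective k
  obtain ⟨l', rfl⟩ := (σe hn).surjective l
  simp only [Fmat, submatrix_apply, Equiv.symm_apply_apply]
  cases k' with
  | inl i =>
    cases l' with
    | inl j => simp [Matrix.fromBlocks]
    | inr j =>
      have h2 : ¬(((σe hn (Sum.inl i)) : ℕ) < 2 ∧ ((σe hn (Sum.inr j)) : ℕ) < 2) := by
        rw [σe_inr_val]; omega
      rw [hm _ _ (hne i j) h2]
      simp [Matrix.fromBlocks]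
  | inr i =>
    cases l' with
    | inl j =>
      have h2 : ¬(((σe hn (Sum.inr i)) : ℕ) < 2 ∧ ((σe hn (Sum.inl j)) : ℕ) < 2) := by
        rw [σe_inr_val]; omega
      rw [hm _ _ (fun h => (hne j i) h.symm) h2]
      simp [Matrix.fromBlocks]
    | inr j =>
      by_cases hij : i = j
      · subst hij; simp [Matrix.fromBlocks]
      · have h2 : ¬(((σe hn (Sum.inr i)) : ℕ) < 2 ∧ ((σe hn (Sum.inr j)) : ℕ) < 2) := by
          rw [σe_inr_val]; omega
        have hij' : σe hn (Sum.inr i) ≠ σe hn (Sum.inr j) := by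
          intro h
          exact hij (Sum.inr.inj ((σe hn).injective h))
        rw [hm _ _ hij' h2]
        simp [Matrix.fromBlocks, Matrix.diagonal_apply_ne _ hij]

end Stmt15Aux

namespace Stmt15Aux

section bprops
variable {n ℓ : ℕ} {b : Fin n → ℂ}

lemma bpow_ne [NeZero n] (hn : 2 ≤ n) (hb01 : b 0 = b 1)
    (hbdist : ∀ i j : Fin n, i ≠ 0 → j ≠ 0 → i ≠ j → b i ^ ℓ ≠ b j ^ ℓ)
    (k l : Fin n) (hkl : k ≠ l) (h2 : ¬((k : ℕ) < 2 ∧ (l : ℕ) < 2)) :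
    b k ^ ℓ ≠ b l ^ ℓ := by
  have h1n : ((1 : Fin n) : ℕ) = 1 := by rw [Fin.val_one']; exact Nat.mod_eq_of_lt (by omega)
  have h0n : ((0 : Fin n) : ℕ) = 0 := Fin.val_zero n
  have h10 : (1 : Fin n) ≠ 0 := fun h => by rw [Fin.ext_iff, h1n, h0n] at h; omega
  by_cases hk0 : k = 0
  · subst hk0
    rw [h0n] at h2
    have hl2 : 2 ≤ (l : ℕ) := by omega
    have hl0 : l ≠ 0 := fun h => by rw [h, h0n] at hl2; omega
    have hl1 : (1 : Fin n) ≠ l := fun h => by rw [← h, h1n] at hl2; omega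
    rw [hb01]
    exact hbdist 1 l h10 hl0 hl1
  · by_cases hl0 : l = 0
    · subst hl0
      rw [h0n] at h2
      have hk2 : 2 ≤ (k : ℕ) := by omega
      have hk1 : k ≠ 1 := fun h => by rw [h, h1n] at hk2; omega
      rw [hb01]
      exact hbdist k 1 hk0 h10 hk1
    · exact hbdist k l hk0 hl0 hkl

lemma b_eq [NeZero n] (hn : 2 ≤ n) (hb01 : b 0 = b 1) (k l : Fin n)
    (hk : (k : ℕ) < 2) (hl : (l : ℕ) < 2) : b k = b l := by
  have h1n : ((1 : Fin n) : ℕ) = 1 := by rw [Fin.val_one']; exact Nat.mod_eq_of_lt (by omega)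
  have h0n : ((0 : Fin n) : ℕ) = 0 := Fin.val_zero n
  have key : ∀ m : Fin n, (m : ℕ) < 2 → b m = b 0 := by
    intro m hm
    by_cases h : (m : ℕ) = 0
    · rw [show m = 0 from Fin.ext (by omega)]
    · rw [show m = 1 from Fin.ext (by omega), hb01]
  rw [key k hk, key l hl]

end bprops

lemma mem_qStab {n ℓ : ℕ} [NeZero ℓ] (M : Vq n ℓ) (g : Gq n ℓ) :
    g ∈ qStab n ℓ M ↔ qAct n ℓ g M = M := Iff.rfl

open Fin.NatCast Fin.CommRing in
lemma mem_stab_iff {n ℓ : ℕ} [NeZero ℓ] [NeZero n] (hn : 2 ≤ n) (b : Fin n → ℂ)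
    (hb01 : b 0 = b 1) (hbne : ∀ i, b i ≠ 0)
    (hbdist : ∀ i j : Fin n, i ≠ 0 → j ≠ 0 → i ≠ j → b i ^ ℓ ≠ b j ^ ℓ)
    (g : Gq n ℓ) :
    g ∈ qStab n ℓ (fun _ => Matrix.diagonal b) ↔
      ((∀ i, g i = g 0) ∧
        (g 0 : Matrix (Fin n) (Fin n) ℂ) * Matrix.diagonal b
          = Matrix.diagonal b * (g 0 : Matrix (Fin n) (Fin n) ℂ)) := by
  rw [mem_qStab, qAct_eq_iff]
  constructor
  · intro h
    set D : Matrix (Fin n) (Fin n) ℂ := Matrix.diagonal b with hD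
    have hDu : D * Matrix.diagonal (fun i => (b i)⁻¹) = 1 := by
      rw [hD, Matrix.diagonal_mul_diagonal,
        show (fun i => b i * (b i)⁻¹) = fun _ => (1:ℂ) from
          funext fun i => mul_inv_cancel₀ (hbne i),
        Matrix.diagonal_one]
    have hDu' : Matrix.diagonal (fun i => (b i)⁻¹) * D = 1 := by
      rw [hD, Matrix.diagonal_mul_diagonal,
        show (fun i => (b i)⁻¹ * b i) = fun _ => (1:ℂ) from
          funext fun i => inv_mul_cancel₀ (hbne i),
        Matrix.diagonal_one]
    set Du : Matrix.GeneralLinearGroup (Fin n) ℂ :=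
      ⟨D, Matrix.diagonal (fun i => (b i)⁻¹), hDu, hDu'⟩ with hDud
    have hDuval : (Du : Matrix (Fin n) (Fin n) ℂ) = D := rfl
    have h' : ∀ i, g (i + 1) * Du = Du * g i := by
      intro i
      apply Units.ext
      rw [Units.val_mul, Units.val_mul, hDuval]
      exact h i
    have claim : ∀ k : ℕ, ∀ i : Fin ℓ, g (i + (k : Fin ℓ)) * Du ^ k = Du ^ k * g i := by
      intro k
      induction k with
      | zero => intro i; simp
      | succ k ih =>
        intro i
        have e1 : ((k + 1 : ℕ) : Fin ℓ) = (k : Fin ℓ) + 1 := by push_cast; ring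
        calc g (i + ((k+1 : ℕ) : Fin ℓ)) * Du ^ (k+1)
            = g ((i + (k : Fin ℓ)) + 1) * (Du * Du ^ k) := by
              rw [e1, ← add_assoc, pow_succ']
          _ = (g ((i + (k : Fin ℓ)) + 1) * Du) * Du ^ k := by rw [mul_assoc]
          _ = (Du * g (i + (k : Fin ℓ))) * Du ^ k := by rw [h' _]
          _ = Du * (g (i + (k : Fin ℓ)) * Du ^ k) := by rw [mul_assoc]
          _ = Du * (Du ^ k * g i) := by rw [ih i]
          _ = Du ^ (k+1) * g i := by rw [← mul_assoc, ← pow_succ']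
    have hpow : (g 0 : Matrix (Fin n) (Fin n) ℂ) * D ^ ℓ
        = D ^ ℓ * (g 0 : Matrix (Fin n) (Fin n) ℂ) := by
      have h1 := claim ℓ 0
      rw [Fin.natCast_self, add_zero] at h1
      have h2 := congrArg Units.val h1
      simpa [Units.val_mul, Units.val_pow_eq_pow_val, hDuval] using h2
    have hDpow : D ^ ℓ = Matrix.diagonal (fun i => b i ^ ℓ) := by
      rw [hD, Matrix.diagonal_pow]; rfl
    have hblk : Blk ((g 0 : Matrix (Fin n) (Fin n) ℂ)) := by
      refine (commute_diagonal_iff_blk (fun i => b i ^ ℓ) ?_ ?_ _).1 ?_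
      · exact fun k l hkl h2 => bpow_ne hn hb01 hbdist k l hkl h2
      · exact fun k l hk hl => by show b k ^ ℓ = b l ^ ℓ; rw [b_eq hn hb01 k l hk hl]
      · rw [← hDpow]; exact hpow
    have hcomm : (g 0 : Matrix (Fin n) (Fin n) ℂ) * D
        = D * (g 0 : Matrix (Fin n) (Fin n) ℂ) := by
      refine (commute_diagonal_iff_blk b ?_ ?_ _).2 hblk
      · exact fun k l hkl h2 hbe => bpow_ne hn hb01 hbdist k l hkl h2 (by rw [hbe])
      · exact fun k l hk hl => b_eq hn hb01 k l hk hl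
    refine ⟨?_, hcomm⟩
    intro i
    have hcu : g 0 * Du = Du * g 0 :=
      Units.ext (by rw [Units.val_mul, Units.val_mul, hDuval]; exact hcomm)
    have h1 := claim i.val 0
    rw [zero_add, Fin.cast_val_eq_self] at h1
    have h2 : g i * Du ^ i.val = g 0 * Du ^ i.val :=
      h1.trans ((Commute.pow_right hcu i.val)).symm
    exact mul_right_cancel h2
  · rintro ⟨hconst, hcomm⟩ i
    rw [hconst (i + 1), hconst i]
    exact hcomm

lemma mem_stab_iff_blk {n ℓ : ℕ} [NeZero ℓ] [NeZero n] (hn : 2 ≤ n) (b : Fin n → ℂ)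
    (hb01 : b 0 = b 1) (hbne : ∀ i, b i ≠ 0)
    (hbdist : ∀ i j : Fin n, i ≠ 0 → j ≠ 0 → i ≠ j → b i ^ ℓ ≠ b j ^ ℓ)
    (g : Gq n ℓ) :
    g ∈ qStab n ℓ (fun _ => Matrix.diagonal b) ↔
      ((∀ i, g i = g 0) ∧ Blk ((g 0 : Matrix (Fin n) (Fin n) ℂ))) := by
  rw [mem_stab_iff hn b hb01 hbne hbdist g]
  refine and_congr_right fun _ => commute_diagonal_iff_blk b ?_ ?_ _
  · exact fun k l hkl h2 hbe => bpow_ne hn hb01 hbdist k l hkl h2 (by rw [hbe])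
  · exact fun k l hk hl => b_eq hn hb01 k l hk hl

def ψfun {n ℓ : ℕ} [NeZero ℓ] (hn : 2 ≤ n)
    (p : Matrix.GeneralLinearGroup (Fin 2) ℂ × (Fin (n - 2) → ℂˣ)) : Gq n ℓ :=
  fun _ => ⟨Fmat hn (↑p.1) (fun k => ↑(p.2 k)),
            Fmat hn (↑p.1⁻¹) (fun k => ↑(p.2 k)⁻¹),
            by
              rw [Fmat_mul,
                show ((p.1 : Matrix (Fin 2) (Fin 2) ℂ) * ↑p.1⁻¹) = 1 from Units.mul_inv _,
                show ((fun k => ((p.2 k : ℂ))) * fun k => (((p.2 k)⁻¹ : ℂˣ) : ℂ)) = 1 from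
                  funext fun k => Units.mul_inv _,
                Fmat_one],
            by
              rw [Fmat_mul,
                show (((p.1⁻¹ : Matrix.GeneralLinearGroup (Fin 2) ℂ) : Matrix (Fin 2) (Fin 2) ℂ)
                    * ↑p.1) = 1 from Units.inv_mul _,
                show ((fun k => (((p.2 k)⁻¹ : ℂˣ) : ℂ)) * fun k => ((p.2 k : ℂ))) = 1 from
                  funext fun k => Units.inv_mul _,
                Fmat_one]⟩

lemma ψfun_mem {n ℓ : ℕ} [NeZero ℓ] [NeZero n] (hn : 2 ≤ n) (b : Fin n → ℂ)
    (hb01 : b 0 = b 1) (hbne : ∀ i, b i ≠ 0)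
    (hbdist : ∀ i j : Fin n, i ≠ 0 → j ≠ 0 → i ≠ j → b i ^ ℓ ≠ b j ^ ℓ)
    (p : Matrix.GeneralLinearGroup (Fin 2) ℂ × (Fin (n - 2) → ℂˣ)) :
    ψfun (ℓ := ℓ) hn p ∈ qStab n ℓ (fun _ => Matrix.diagonal b) := by
  rw [mem_stab_iff_blk hn b hb01 hbne hbdist]
  exact ⟨fun i => rfl, blk_Fmat hn _ _⟩

def ψ {n ℓ : ℕ} [NeZero ℓ] [NeZero n] (hn : 2 ≤ n) (b : Fin n → ℂ)
    (hb01 : b 0 = b 1) (hbne : ∀ i, b i ≠ 0)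
    (hbdist : ∀ i j : Fin n, i ≠ 0 → j ≠ 0 → i ≠ j → b i ^ ℓ ≠ b j ^ ℓ) :
    (Matrix.GeneralLinearGroup (Fin 2) ℂ × (Fin (n - 2) → ℂˣ)) →*
      (qStab n ℓ (fun _ => Matrix.diagonal b)) :=
  MonoidHom.mk' (fun p => ⟨ψfun hn p, ψfun_mem hn b hb01 hbne hbdist p⟩) (by
    intro p q
    apply Subtype.ext
    show ψfun hn (p * q) = ψfun hn p * ψfun hn q
    funext i
    apply Units.ext
    show Fmat hn (↑(p.1 * q.1)) (fun k => ↑((p.2 * q.2) k))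
      = Fmat hn (↑p.1) (fun k => ↑(p.2 k)) * Fmat hn (↑q.1) (fun k => ↑(q.2 k))
    rw [Fmat_mul, Units.val_mul]
    rfl)

lemma ψ_inj {n ℓ : ℕ} [NeZero ℓ] [NeZero n] (hn : 2 ≤ n) (b : Fin n → ℂ)
    (hb01 : b 0 = b 1) (hbne : ∀ i, b i ≠ 0)
    (hbdist : ∀ i j : Fin n, i ≠ 0 → j ≠ 0 → i ≠ j → b i ^ ℓ ≠ b j ^ ℓ) :
    Function.Injective (ψ (ℓ := ℓ) hn b hb01 hbne hbdist) := by
  intro p q h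
  have h1 : ψfun (ℓ := ℓ) hn p = ψfun hn q := congrArg Subtype.val h
  have h0 : Fmat hn (↑p.1) (fun k => ↑(p.2 k)) = Fmat hn (↑q.1) (fun k => ↑(q.2 k)) :=
    congrArg Units.val (congrFun h1 0)
  obtain ⟨hA, ht⟩ := Fmat_inj hn h0
  exact Prod.ext (Units.ext hA) (funext fun k => Units.ext (congrFun ht k))

lemma ψ_surj {n ℓ : ℕ} [NeZero ℓ] [NeZero n] (hn : 2 ≤ n) (b : Fin n → ℂ)
    (hb01 : b 0 = b 1) (hbne : ∀ i, b i ≠ 0)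
    (hbdist : ∀ i j : Fin n, i ≠ 0 → j ≠ 0 → i ≠ j → b i ^ ℓ ≠ b j ^ ℓ) :
    Function.Surjective (ψ (ℓ := ℓ) hn b hb01 hbne hbdist) := by
  rintro ⟨g, hg⟩
  obtain ⟨hconst, hblk⟩ := (mem_stab_iff_blk hn b hb01 hbne hbdist g).1 hg
  have hginv : g⁻¹ ∈ qStab n ℓ (fun _ => Matrix.diagonal b) := inv_mem hg
  obtain ⟨hconst', hblk'⟩ := (mem_stab_iff_blk hn b hb01 hbne hbdist g⁻¹).1 hginv
  have hblkinv : Blk ((((g 0)⁻¹ : Matrix.GeneralLinearGroup (Fin n) ℂ) :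
      Matrix (Fin n) (Fin n) ℂ)) := hblk'
  set A : Matrix (Fin 2) (Fin 2) ℂ := Matrix.of fun i j =>
    (g 0 : Matrix (Fin n) (Fin n) ℂ) (σe hn (Sum.inl i)) (σe hn (Sum.inl j)) with hAdef
  set t : Fin (n - 2) → ℂ := fun k =>
    (g 0 : Matrix (Fin n) (Fin n) ℂ) (σe hn (Sum.inr k)) (σe hn (Sum.inr k)) with htdef
  set A' : Matrix (Fin 2) (Fin 2) ℂ := Matrix.of fun i j =>
    (((g 0)⁻¹ : Matrix.GeneralLinearGroup (Fin n) ℂ) : Matrix (Fin n) (Fin n) ℂ)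
      (σe hn (Sum.inl i)) (σe hn (Sum.inl j)) with hA'def
  set t' : Fin (n - 2) → ℂ := fun k =>
    (((g 0)⁻¹ : Matrix.GeneralLinearGroup (Fin n) ℂ) : Matrix (Fin n) (Fin n) ℂ)
      (σe hn (Sum.inr k)) (σe hn (Sum.inr k)) with ht'def
  have hg0 : (g 0 : Matrix (Fin n) (Fin n) ℂ) = Fmat hn A t := blk_eq_Fmat hn hblk
  have hg0' : (((g 0)⁻¹ : Matrix.GeneralLinearGroup (Fin n) ℂ) :
      Matrix (Fin n) (Fin n) ℂ) = Fmat hn A' t' := blk_eq_Fmat hn hblkinv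
  have e1 : Fmat hn (A * A') (t * t') = Fmat hn 1 1 := by
    rw [← Fmat_mul, ← hg0, ← hg0', Units.mul_inv, Fmat_one]
  have e2 : Fmat hn (A' * A) (t' * t) = Fmat hn 1 1 := by
    rw [← Fmat_mul, ← hg0, ← hg0', Units.inv_mul, Fmat_one]
  obtain ⟨hAA', htt'⟩ := Fmat_inj hn e1
  obtain ⟨hA'A, ht't⟩ := Fmat_inj hn e2
  refine ⟨(⟨A, A', hAA', hA'A⟩, fun k => ⟨t k, t' k, congrFun htt' k, congrFun ht't k⟩), ?_⟩
  apply Subtype.ext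
  show ψfun hn _ = g
  funext i
  apply Units.ext
  show Fmat hn A (fun k => t k) = (g i : Matrix (Fin n) (Fin n) ℂ)
  rw [hconst i, hg0]

end Stmt15Aux

theorem stmt_15 (n ℓ : ℕ) [NeZero ℓ] [NeZero n] (hn : 2 ≤ n) (b : Fin n → ℂ)
    -- `b = diag(b₂, b₂, b₃, …, b_n)`: the first two entries agree, all entries are nonzero,
    -- and the entries from index `1` on have pairwise distinct `ℓ`-th powers
    (hb01 : b 0 = b 1)
    (hbne : ∀ i : Fin n, b i ≠ 0)
    (hbdist : ∀ i j : Fin n, i ≠ 0 → j ≠ 0 → i ≠ j → b i ^ ℓ ≠ b j ^ ℓ) :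
    -- the stabilizer of `X_b = (b, …, b)` consists exactly of the constant tuples
    -- `(g, …, g)` with `g` commuting with `b`
    (∀ g : Gq n ℓ, g ∈ qStab n ℓ (fun _ => Matrix.diagonal b) ↔
      ((∀ i j : Fin ℓ, g i = g j) ∧
        (g 0 : Matrix (Fin n) (Fin n) ℂ) * Matrix.diagonal b
          = Matrix.diagonal b * (g 0 : Matrix (Fin n) (Fin n) ℂ))) ∧
    -- such `g` are precisely the block-diagonal matrices `diag(A, t₃, …, t_n)`:
    (∀ g : Gq n ℓ, g ∈ qStab n ℓ (fun _ => Matrix.diagonal b) ↔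
      ((∀ i j : Fin ℓ, g i = g j) ∧
        (∀ k l : Fin n, k ≠ l → ¬((k : ℕ) < 2 ∧ (l : ℕ) < 2) →
          (g 0 : Matrix (Fin n) (Fin n) ℂ) k l = 0))) ∧
    -- in particular, the stabilizer is isomorphic to `GL₂(ℂ) × (ℂ^×)^{n-2}`
    Nonempty (qStab n ℓ (fun _ => Matrix.diagonal b) ≃*
      (Matrix.GeneralLinearGroup (Fin 2) ℂ × (Fin (n - 2) → ℂˣ))) := by
  refine ⟨?_, ?_, ?_⟩
  · intro g
    rw [Stmt15Aux.mem_stab_iff hn b hb01 hbne hbdist g]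
    constructor
    · rintro ⟨h1, h2⟩; exact ⟨fun i j => (h1 i).trans (h1 j).symm, h2⟩
    · rintro ⟨h1, h2⟩; exact ⟨fun i => h1 i 0, h2⟩
  · intro g
    rw [Stmt15Aux.mem_stab_iff_blk hn b hb01 hbne hbdist g]
    constructor
    · rintro ⟨h1, h2⟩; exact ⟨fun i j => (h1 i).trans (h1 j).symm, h2⟩
    · rintro ⟨h1, h2⟩; exact ⟨fun i => h1 i 0, h2⟩
  · exact ⟨(MulEquiv.ofBijective (Stmt15Aux.ψ hn b hb01 hbne hbdist)
      ⟨Stmt15Aux.ψ_inj hn b hb01 hbne hbdist, Stmt15Aux.ψ_surj hn b hb01 hbne hbdist⟩).symm⟩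


end
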